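/- arXiv:2502.09584 — 2 statements merged into one kernel-verified Lean document; each statement's English description precedes it below -/
import Mathlib

section
/- Let w ∼ w' be neighboring strings and ε > 0, δ ∈ (0,1). Define the set BAD ⊆ ℕ by BAD = [|Compress(w)| + 1, |Compress(w')| + 1] (the integer interval) if |Compress(w')| ≥ |Compress(w)|, and BAD = {|Compress(w)| + 1} otherwise. Then Pr[|DPCompress(w, ε, δ)| ∈ BAD] ≤ δ. -/
open MeasureTheory

/-- `w ∼ w'`: strings of length `n` (1-indexed positions) differing in exactly
one position. -/
def Neighbor {α : Type*} (n : ℕ) (w w' : ℕ → α) : Prop :=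
  ∃ j, 1 ≤ j ∧ j ≤ n ∧ w j ≠ w' j ∧ ∀ i, i ≠ j → w i = w' i

/-- The Laplace distribution with mean `0` and scale parameter `b`, given by the
density `z ↦ (1/(2b))·exp(−|z|/b)` with respect to Lebesgue measure. -/
noncomputable def laplaceMeasure (b : ℝ) : Measure ℝ :=
  volume.withDensity (fun z => ENNReal.ofReal ((1 / (2 * b)) * Real.exp (-|z| / b)))

open Set Real Filter Topology

lemma exp_div_integrableOn_Iic {b : ℝ} (hb : 0 < b) (t : ℝ) :
    IntegrableOn (fun x => Real.exp (x / b)) (Set.Iic t) := by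
  have h : IntegrableOn (fun x : ℝ => Real.exp (-(1/b) * x)) (Ioi (-t)) :=
    exp_neg_integrableOn_Ioi _ (by positivity)
  have h2 := (MeasurePreserving.integrableOn_comp_preimage
    (Measure.measurePreserving_neg (volume : Measure ℝ))
    (Homeomorph.neg ℝ).measurableEmbedding).2 h
  have hpre : (fun x : ℝ => -x) ⁻¹' Ioi (-t) = Iio t := by
    ext x; simp [neg_lt]
  rw [hpre] at h2
  have h3 : IntegrableOn (fun x : ℝ => Real.exp (x / b)) (Iio t) := by
    refine h2.congr_fun (fun x _ => ?_) measurableSet_Iio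
    simp [neg_mul, mul_comm, div_eq_mul_inv, one_mul]
  rwa [integrableOn_Iic_iff_integrableOn_Iio]

lemma integral_exp_div_Iic {b : ℝ} (hb : 0 < b) (t : ℝ) :
    ∫ x in Iic t, Real.exp (x / b) = b * Real.exp (t / b) := by
  have hderiv : ∀ x ∈ Iic t, HasDerivAt (fun x => b * Real.exp (x / b))
      (Real.exp (x / b)) x := by
    intro x _
    have h1 : HasDerivAt (fun x : ℝ => x / b) (1 / b) x := by
      simpa using (hasDerivAt_id x).div_const b
    have h2 := (Real.hasDerivAt_exp (x / b)).comp x h1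
    have h3 : HasDerivAt (fun x => b * Real.exp (x / b)) (b * (Real.exp (x / b) * (1 / b))) x := h2.const_mul b
    convert h3 using 1
    field_simp
  have htend : Tendsto (fun x => b * Real.exp (x / b)) atBot (𝓝 0) := by
    rw [show (0:ℝ) = b * 0 by ring]
    exact (Real.tendsto_exp_atBot.comp (tendsto_id.atBot_div_const hb)).const_mul b
  have := integral_Iic_of_hasDerivAt_of_tendsto' hderiv (exp_div_integrableOn_Iic hb t) htend
  rw [this]; ring

lemma laplace_Iic {b : ℝ} (hb : 0 < b) {t : ℝ} (ht : t ≤ 0) :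
    laplaceMeasure b (Iic t) = ENNReal.ofReal ((1/2) * Real.exp (t / b)) := by
  rw [laplaceMeasure, withDensity_apply _ measurableSet_Iic]
  have hcong : ∀ x ∈ Iic t, ENNReal.ofReal ((1 / (2 * b)) * Real.exp (-|x| / b))
      = ENNReal.ofReal ((1 / (2 * b)) * Real.exp (x / b)) := by
    intro x hx
    have hx0 : x ≤ 0 := le_trans hx ht
    rw [abs_of_nonpos hx0, neg_neg]
  rw [setLIntegral_congr_fun measurableSet_Iic hcong]
  rw [← ofReal_integral_eq_lintegral_ofReal
    (((exp_div_integrableOn_Iic hb t).const_mul _))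
    (Filter.Eventually.of_forall (fun x => by positivity))]
  rw [integral_const_mul, integral_exp_div_Iic hb t]
  congr 1
  field_simp

lemma laplace_Ioi {b : ℝ} (hb : 0 < b) {t : ℝ} (ht : 0 ≤ t) :
    laplaceMeasure b (Ioi t) = ENNReal.ofReal ((1/2) * Real.exp (-t / b)) := by
  rw [laplaceMeasure, withDensity_apply _ measurableSet_Ioi]
  have hcong : ∀ x ∈ Ioi t, ENNReal.ofReal ((1 / (2 * b)) * Real.exp (-|x| / b))
      = ENNReal.ofReal ((1 / (2 * b)) * Real.exp (-x / b)) := by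
    intro x hx
    rw [abs_of_nonneg (le_trans ht (le_of_lt hx))]
  rw [setLIntegral_congr_fun measurableSet_Ioi hcong]
  have hint : IntegrableOn (fun x : ℝ => Real.exp (-x / b)) (Ioi t) := by
    refine (exp_neg_integrableOn_Ioi t (b := 1/b) (by positivity)).congr_fun
      (fun x _ => ?_) measurableSet_Ioi
    rw [neg_div, div_eq_mul_inv]
    ring_nf
  rw [← ofReal_integral_eq_lintegral_ofReal (hint.const_mul _)
    (Filter.Eventually.of_forall (fun x => by positivity))]
  have hval : ∫ x in Ioi t, Real.exp (-x / b) = b * Real.exp (-t / b) := by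
    have h := integral_comp_neg_Iic (-t) (fun x => Real.exp (-x / b))
    simp only [neg_neg] at h
    rw [← h, ← integral_exp_div_Iic hb (-t)]
  rw [integral_const_mul, hval]
  congr 1
  field_simp

lemma laplace_univ {b : ℝ} (hb : 0 < b) : laplaceMeasure b Set.univ = 1 := by
  have : (Set.univ : Set ℝ) = Iic 0 ∪ Ioi 0 := (Set.Iic_union_Ioi).symm
  rw [this, measure_union (Iic_disjoint_Ioi le_rfl) measurableSet_Ioi,
    laplace_Iic hb le_rfl, laplace_Ioi hb le_rfl]
  rw [← ENNReal.ofReal_add (by positivity) (by positivity)]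
  norm_num

lemma laplace_Iic_le {b δ : ℝ} (hb : 0 < b) (hδ0 : 0 < δ) (hδ1 : δ < 1) :
    laplaceMeasure b (Iic (b * Real.log (2 * δ))) ≤ ENNReal.ofReal δ := by
  set t := b * Real.log (2 * δ) with ht
  have hexp : Real.exp (t / b) = 2 * δ := by
    rw [ht, mul_comm, mul_div_assoc, div_self hb.ne', mul_one, Real.exp_log (by positivity)]
  rcases le_or_gt t 0 with h | h
  · rw [laplace_Iic hb h, hexp]
    apply ENNReal.ofReal_le_ofReal
    linarith
  · have hIoi : laplaceMeasure b (Ioi t) = ENNReal.ofReal ((1/2) * Real.exp (-t / b)) :=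
      laplace_Ioi hb h.le
    have hcompl : laplaceMeasure b (Iic t) = 1 - ENNReal.ofReal ((1/2) * Real.exp (-t / b)) := by
      have hIicc : Iic t = (Ioi t)ᶜ := (Set.compl_Ioi).symm
      rw [← hIoi, ← laplace_univ hb, hIicc]
      exact measure_compl measurableSet_Ioi (by rw [hIoi]; exact ENNReal.ofReal_ne_top)
    rw [hcompl]
    rw [tsub_le_iff_right, ← ENNReal.ofReal_add hδ0.le (by positivity),
      ← ENNReal.ofReal_one]
    apply ENNReal.ofReal_le_ofReal
    have he : Real.exp (-t / b) = 1 / (2 * δ) := by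
      rw [neg_div, Real.exp_neg, hexp, one_div]
    rw [he]
    have key : δ + 1/2 * (1/(2*δ)) - 1 = (2*δ-1)^2 / (4*δ) := by
      field_simp
      ring
    have h4 : (0:ℝ) ≤ (2*δ-1)^2 / (4*δ) := div_nonneg (sq_nonneg _) (by positivity)
    linarith

/-- The length of `DPCompress(w, ε, δ)` when the Laplace sample is `z`:
`|Compress(w)| + p` with padding `p = max {1, ⌈z + k⌉}`. -/
noncomputable def dpLen (c : ℕ) (k z : ℝ) : ℕ :=
  c + (max 1 ⌈z + k⌉).toNat

/-- Claim: the bad event has probability at most `δ`.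
Let `w ∼ w'` be neighboring strings and `ε > 0`, `δ ∈ (0,1)`.  With
`BAD = [|Compress(w)|+1, |Compress(w')|+1]` if `|Compress(w')| ≥ |Compress(w)|`
and `BAD = {|Compress(w)|+1}` otherwise,
`Pr[|DPCompress(w, ε, δ)| ∈ BAD] ≤ δ`. -/
theorem dpcompress_bad_event {α β : Type*} (n : ℕ) (hn : 1 ≤ n)
    (Compress : (ℕ → α) → List β) (GS : ℕ) (hGSpos : 0 < GS)
    (hGS : ∀ w w' : ℕ → α, Neighbor n w w' →
      |((Compress w).length : ℤ) - ((Compress w').length : ℤ)| ≤ (GS : ℤ))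
    (ε δ : ℝ) (hε : 0 < ε) (hδ0 : 0 < δ) (hδ1 : δ < 1)
    (w w' : ℕ → α) (hnb : Neighbor n w w') :
    laplaceMeasure ((GS : ℝ) / ε)
        {z : ℝ | dpLen (Compress w).length
            ((GS : ℝ) / ε * Real.log (1 / (2 * δ)) + GS + 1) z ∈
          (if (Compress w).length ≤ (Compress w').length then
              Set.Icc ((Compress w).length + 1) ((Compress w').length + 1)
            else {(Compress w).length + 1} : Set ℕ)}
      ≤ ENNReal.ofReal δ := by

  set c := (Compress w).length with hc
  set c' := (Compress w').length with hc'
  set b := (GS : ℝ) / ε with hbdef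
  have hb : 0 < b := div_pos (by exact_mod_cast hGSpos) hε
  set k := b * Real.log (1 / (2 * δ)) + GS + 1 with hk
  set t := b * Real.log (2 * δ) with htdef
  have hkt : (GS : ℝ) + 1 - k = t := by
    have hlog : Real.log (1 / (2 * δ)) = -Real.log (2 * δ) := by
      rw [one_div, Real.log_inv]
    rw [hk, hlog, htdef]; ring
  have hGSc := hGS w w' hnb
  have habs := abs_le.mp hGSc
  have hsub : {z : ℝ | dpLen c k z ∈
      (if c ≤ c' then Set.Icc (c + 1) (c' + 1) else {c + 1} : Set ℕ)} ⊆ Set.Iic t := by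
    intro z hz
    simp only [Set.mem_setOf_eq, dpLen] at hz
    have hm1 : (1 : ℤ) ≤ max 1 ⌈z + k⌉ := le_max_left _ _
    have hceil : ⌈z + k⌉ ≤ (GS : ℤ) + 1 := by
      have hle : (max 1 ⌈z + k⌉).toNat ≤ GS + 1 := by
        split_ifs at hz with hcc
        · rw [Set.mem_Icc] at hz
          omega
        · rw [Set.mem_singleton_iff] at hz
          omega
      calc ⌈z + k⌉ ≤ max 1 ⌈z + k⌉ := le_max_right _ _
        _ = ((max 1 ⌈z + k⌉).toNat : ℤ) := (Int.toNat_of_nonneg (by omega)).symm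
        _ ≤ (GS : ℤ) + 1 := by exact_mod_cast hle
    have hzk : z + k ≤ ((GS : ℤ) + 1 : ℤ) := Int.ceil_le.mp hceil
    push_cast at hzk
    have : z ≤ t := by linarith
    exact this
  exact le_trans (measure_mono hsub) (laplace_Iic_le hb hδ0 hδ1)
end

section
/- Let w ∼ w' ∈ Σⁿ be neighboring strings, and let (B₁,…,B_t) = Compress(w) and (B'₁,…,B'_{t'}) = Compress(w') be their LZ77 block decompositions. Then t' − t ≤ t₂, where t₂ is the number of type-2 blocks among B₁,…,B_t. -/
/-- A single LZ77 block `[q, len, c]`. -/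
structure LZBlock (α : Type*) where
  q : ℕ
  len : ℕ
  c : α

/-- `s_i` (1-indexed start position of the `i`-th block, `i` 0-indexed). -/
def blockStart {α : Type*} (B : List (LZBlock α)) (i : ℕ) : ℕ :=
  1 + ((B.take i).map (fun b => b.len + 1)).sum

/-- `f_i` (1-indexed final position of the `i`-th block, `i` 0-indexed). -/
def blockFin {α : Type*} (B : List (LZBlock α)) (i : ℕ) : ℕ :=
  ((B.take (i + 1)).map (fun b => b.len + 1)).sum

/-- `ℓ_i`, recovered as `f_i - s_i`. -/
def lenAt {α : Type*} (B : List (LZBlock α)) (i : ℕ) : ℕ :=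
  blockFin B i - blockStart B i

/-- Non-overlapping LZ77 parse, sliding window `W`, of the length-`n` string `w`
(1-indexed positions). -/
def IsLZ77Parse {α : Type*} (W n : ℕ) (w : ℕ → α) (B : List (LZBlock α)) : Prop :=
  ((B.map (fun b => b.len + 1)).sum = n) ∧
  ∀ i : Fin B.length,
    ((B.get i).c = w (blockStart B i.1 + (B.get i).len)) ∧
    ((B.get i).len = 0 → (B.get i).q = 0) ∧
    (0 < (B.get i).len →
      1 ≤ (B.get i).q ∧
      blockStart B i.1 ≤ (B.get i).q + W ∧
      (B.get i).q + (B.get i).len ≤ blockStart B i.1 ∧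
      ∀ d < (B.get i).len, w ((B.get i).q + d) = w (blockStart B i.1 + d)) ∧
    (blockStart B i.1 + (B.get i).len + 1 ≤ n →
      ¬ ∃ q', 1 ≤ q' ∧ blockStart B i.1 ≤ q' + W ∧
          q' + (B.get i).len + 1 ≤ blockStart B i.1 ∧
          ∀ d ≤ (B.get i).len, w (q' + d) = w (blockStart B i.1 + d))

/-- LZ77 parse with self-referencing (unbounded window). -/
def IsLZ77SRParse {α : Type*} (n : ℕ) (w : ℕ → α) (B : List (LZBlock α)) : Prop :=
  ((B.map (fun b => b.len + 1)).sum = n) ∧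
  ∀ i : Fin B.length,
    ((B.get i).c = w (blockStart B i.1 + (B.get i).len)) ∧
    ((B.get i).len = 0 → (B.get i).q = 0) ∧
    (0 < (B.get i).len →
      1 ≤ (B.get i).q ∧
      (B.get i).q < blockStart B i.1 ∧
      ∀ d < (B.get i).len, w ((B.get i).q + d) = w (blockStart B i.1 + d)) ∧
    (blockStart B i.1 + (B.get i).len + 1 ≤ n →
      ¬ ∃ q', 1 ≤ q' ∧ q' < blockStart B i.1 ∧
          ∀ d ≤ (B.get i).len, w (q' + d) = w (blockStart B i.1 + d))

/-- `M_i`: the set of (0-indexed) blocks of `B'` that start inside block `i` of `B`. -/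
def Mset {α : Type*} (B B' : List (LZBlock α)) (i : ℕ) : Finset ℕ :=
  (Finset.range B'.length).filter
    (fun k => blockStart B i ≤ blockStart B' k ∧ blockStart B' k ≤ blockFin B i)

/-- Indices of type-`m` blocks of `B` (relative to `B'`). -/
def typeSet {α : Type*} (B B' : List (LZBlock α)) (m : ℕ) : Finset ℕ :=
  (Finset.range B.length).filter (fun i => (Mset B B' i).card = m)

/-- Number of bits used to encode each block. -/
def codeLen (n cardS : ℕ) : ℕ :=
  2 * Nat.clog 2 n + Nat.clog 2 cardS
section LZAux

variable {α : Type*}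

lemma sum_take_succ' (B : List (LZBlock α)) (i : ℕ) (h : i < B.length) :
    ((B.take (i+1)).map (fun b => b.len + 1)).sum
      = ((B.take i).map (fun b => b.len + 1)).sum + ((B.get ⟨i, h⟩).len + 1) := by
  conv_lhs => rw [List.take_succ]
  rw [List.map_append, List.sum_append]
  simp [List.getElem?_eq_getElem h]

lemma blockStart_succ (B : List (LZBlock α)) (i : ℕ) (h : i < B.length) :
    blockStart B (i+1) = blockStart B i + (B.get ⟨i, h⟩).len + 1 := by
  unfold blockStart
  rw [sum_take_succ' B i h]; omega

lemma blockFin_eq (B : List (LZBlock α)) (i : ℕ) (h : i < B.length) :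
    blockFin B i = blockStart B i + (B.get ⟨i, h⟩).len := by
  unfold blockFin blockStart
  rw [sum_take_succ' B i h]; omega

lemma blockStart_le_succ (B : List (LZBlock α)) (i : ℕ) :
    blockStart B i ≤ blockStart B (i+1) := by
  rcases Nat.lt_or_ge i B.length with h | h
  · rw [blockStart_succ B i h]; omega
  · unfold blockStart
    rw [List.take_of_length_le h, List.take_of_length_le (by omega)]

lemma blockStart_mono (B : List (LZBlock α)) : Monotone (blockStart B) :=
  monotone_nat_of_le_succ (blockStart_le_succ B)

lemma blockStart_lt (B : List (LZBlock α)) {a b : ℕ} (hab : a < b) (hb : b ≤ B.length) :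
    blockStart B a < blockStart B b := by
  have h1 : a < B.length := by omega
  have h2 := blockStart_succ B a h1
  have h3 := blockStart_mono B (show a + 1 ≤ b by omega)
  omega

lemma one_le_blockStart (B : List (LZBlock α)) (i : ℕ) : 1 ≤ blockStart B i := by
  unfold blockStart; omega

lemma blockStart_total {n : ℕ} {B : List (LZBlock α)}
    (h : (B.map (fun b => b.len + 1)).sum = n) : blockStart B B.length = n + 1 := by
  unfold blockStart
  rw [List.take_length, h]; omega

lemma blockStart_le_n {n : ℕ} {B : List (LZBlock α)}
    (h : (B.map (fun b => b.len + 1)).sum = n) {i : ℕ} (hi : i < B.length) :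
    blockStart B i ≤ n := by
  have := blockStart_lt B hi (le_refl _)
  rw [blockStart_total h] at this; omega

lemma blockFin_le_n {n : ℕ} {B : List (LZBlock α)}
    (h : (B.map (fun b => b.len + 1)).sum = n) {i : ℕ} (hi : i < B.length) :
    blockFin B i ≤ n := by
  have h1 := blockFin_eq B i hi
  have h2 := blockStart_succ B i hi
  have h3 := blockStart_mono B (show i + 1 ≤ B.length by omega)
  rw [blockStart_total h] at h3; omega

lemma lt_length_of_blockStart_le {n : ℕ} {B : List (LZBlock α)}
    (h : (B.map (fun b => b.len + 1)).sum = n) {i : ℕ} (hi : blockStart B i ≤ n) :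
    i < B.length := by
  by_contra hc
  have := blockStart_mono B (show B.length ≤ i by omega)
  rw [blockStart_total h] at this; omega

/-- Master lemma: if there is an earlier occurrence of length `m` matching the text
starting at block `r` of a parse `Y`, then block `r` has length at least `m`. -/
lemma ge_of_copy {n : ℕ} {u : ℕ → α} {Y : List (LZBlock α)} (hY : IsLZ77Parse n n u Y)
    {r : ℕ} (hr : r < Y.length) {q m : ℕ} (hq1 : 1 ≤ q)
    (hqm : q + m ≤ blockStart Y r)
    (hcopy : ∀ d < m, u (q + d) = u (blockStart Y r + d))
    (hmn : blockStart Y r + m ≤ n) :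
    m ≤ (Y.get ⟨r, hr⟩).len := by
  by_contra hlt
  push_neg at hlt
  obtain ⟨-, -, -, hmax⟩ := hY.2 ⟨r, hr⟩
  simp only [Fin.val_mk] at hmax
  exact hmax (by omega) ⟨q, hq1, by omega, by omega, fun d hd => hcopy d (by omega)⟩

/-- Synchronization: the parses of `w` and `w'` agree on blocks (weakly) before the
edit position `j`. -/
lemma sync {n j : ℕ} {w w' : ℕ → α} (hw : ∀ p, p ≠ j → w p = w' p) (hjn : j ≤ n)
    {B B' : List (LZBlock α)} (hB : IsLZ77Parse n n w B) (hB' : IsLZ77Parse n n w' B') :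
    ∀ r, blockStart B r ≤ j → blockStart B' r = blockStart B r := by
  intro r
  induction r with
  | zero => simp [blockStart]
  | succ r ih =>
    intro hle
    have hrB : r < B.length := by
      by_contra hc
      have := blockStart_mono B (show B.length ≤ r by omega)
      rw [blockStart_total hB.1] at this
      have := blockStart_le_succ B r
      omega
    have hsucc := blockStart_succ B r hrB
    have hfe := blockFin_eq B r hrB
    have hfin : blockFin B r < j := by omega
    have hs : blockStart B' r = blockStart B r := ih (by omega)
    have hrB' : r < B'.length :=
      lt_length_of_blockStart_le hB'.1 (by rw [hs]; omega)
    set s := blockStart B r with hsdef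
    set L := (B.get ⟨r, hrB⟩).len with hLdef
    set L' := (B'.get ⟨r, hrB'⟩).len with hL'def
    have hle1 : L ≤ L' := by
      rcases Nat.eq_zero_or_pos L with h0 | hpos
      · omega
      · obtain ⟨-, -, hposf, -⟩ := hB.2 ⟨r, hrB⟩
        obtain ⟨hq1, -, hqs, hcopyw⟩ := hposf hpos
        simp only [Fin.val_mk] at hqs hcopyw
        refine ge_of_copy hB' hrB' hq1 (by rw [hs]; omega) (fun d hd => ?_) (by rw [hs]; omega)
        rw [hs]
        have e1 : (B.get ⟨r, hrB⟩).q + d ≠ j := by omega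
        have e2 : s + d ≠ j := by omega
        rw [← hw _ e1, ← hw _ e2]
        exact hcopyw d hd
    have hle2 : L' ≤ L := by
      by_contra hc
      push_neg at hc
      obtain ⟨-, -, hposf', -⟩ := hB'.2 ⟨r, hrB'⟩
      obtain ⟨hq1', -, hqs', hcopyw'⟩ := hposf' (by omega)
      simp only [Fin.val_mk] at hqs' hcopyw'
      rw [hs] at hqs' hcopyw'
      have := ge_of_copy hB hrB hq1' (show (B'.get ⟨r, hrB'⟩).q + (L + 1) ≤ s by omega)
        (fun d hd => ?_) (by omega)
      · omega
      · have e1 : (B'.get ⟨r, hrB'⟩).q + d ≠ j := by omega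
        have e2 : s + d ≠ j := by omega
        rw [hw _ e1, hw _ e2]
        exact hcopyw' d (by omega)
    have hsucc' := blockStart_succ B' r hrB'
    omega
lemma mem_Mset {B B' : List (LZBlock α)} {i k : ℕ} :
    k ∈ Mset B B' i ↔ k < B'.length ∧ blockStart B i ≤ blockStart B' k ∧
      blockStart B' k ≤ blockFin B i := by
  simp [Mset, Finset.mem_filter, Finset.mem_range, and_assoc]

lemma card_Mset_le_two {n : ℕ} {w w' : ℕ → α} (hnb : Neighbor n w w')
    {B B' : List (LZBlock α)}
    (hB : IsLZ77Parse n n w B) (hB' : IsLZ77Parse n n w' B')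
    {i : ℕ} (hi : i < B.length) : (Mset B B' i).card ≤ 2 := by
  obtain ⟨j, hj1, hjn, -, hagree⟩ := hnb
  by_contra hcard
  push_neg at hcard
  have hne : (Mset B B' i).Nonempty := Finset.card_pos.mp (by omega)
  set a := (Mset B B' i).min' hne with hadef
  set c := (Mset B B' i).max' hne with hcdef
  have hac : a < c := Finset.min'_lt_max'_of_card _ (by omega)
  have hamem : a ∈ Mset B B' i := Finset.min'_mem _ _
  have hcmem : c ∈ Mset B B' i := Finset.max'_mem _ _
  have hbne : (((Mset B B' i).erase a).erase c).Nonempty := by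
    rw [← Finset.card_pos, Finset.card_erase_of_mem (Finset.mem_erase.mpr ⟨by omega, hcmem⟩),
      Finset.card_erase_of_mem hamem]
    omega
  obtain ⟨b, hbmem'⟩ := hbne
  rw [Finset.mem_erase, Finset.mem_erase] at hbmem'
  obtain ⟨hbc, hba, hbmem⟩ := hbmem'
  have hab : a < b := lt_of_le_of_ne (Finset.min'_le _ _ hbmem) (Ne.symm hba)
  have hbc' : b < c := lt_of_le_of_ne (Finset.le_max' _ _ hbmem) hbc
  rw [mem_Mset] at hamem hbmem hcmem
  obtain ⟨hat, has, haf⟩ := hamem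
  obtain ⟨hbt, hbs, hbf⟩ := hbmem
  obtain ⟨hct, hcs, hcf⟩ := hcmem
  set s := blockStart B i with hsdef
  set Li := (B.get ⟨i, hi⟩).len with hLidef
  have hf : blockFin B i = s + Li := blockFin_eq B i hi
  set s' := blockStart B' b with hs'def
  set L' := (B'.get ⟨b, hbt⟩).len with hL'def
  have h1 : s < s' := lt_of_le_of_lt has (blockStart_lt B' hab (by omega))
  have h2 : blockStart B' (b+1) = s' + L' + 1 := blockStart_succ B' b hbt
  have h3 : s' + L' + 1 ≤ s + Li := by
    have := blockStart_mono B' (show b + 1 ≤ c by omega)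
    omega
  have hfn : s + Li ≤ n := by have := blockFin_le_n hB.1 hi; omega
  have hLipos : 0 < Li := by omega
  obtain ⟨-, -, hposf, -⟩ := hB.2 ⟨i, hi⟩
  obtain ⟨hq1, -, hqs, hcopyw⟩ := hposf hLipos
  simp only [Fin.val_mk] at hqs hcopyw
  rw [← hsdef] at hqs hcopyw
  set q := (B.get ⟨i, hi⟩).q with hqdef
  obtain ⟨δ, hδ, hδpos⟩ : ∃ δ, s' = s + δ ∧ 0 < δ := ⟨s' - s, by omega, by omega⟩
  have hδLi : δ + L' + 1 ≤ Li := by omega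
  -- Claim A : the edit position j is not inside [s', s'+L']
  have hA : ¬ (s' ≤ j ∧ j ≤ s' + L') := by
    rintro ⟨hA1, hA2⟩
    have hsync := sync hagree hjn hB hB' i (by omega)
    have hiB' : i < B'.length :=
      lt_length_of_blockStart_le hB'.1 (by rw [hsync, ← hsdef]; omega)
    obtain ⟨m, hm⟩ : ∃ m, j = s + m := ⟨j - s, by omega⟩
    have hmli : m < Li := by omega
    have hge := ge_of_copy hB' hiB' hq1 (q := q) (m := m)
      (by rw [hsync, ← hsdef]; omega)
      (fun d hd => by
        rw [hsync, ← hsdef]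
        have e1 : q + d ≠ j := by omega
        have e2 : s + d ≠ j := by omega
        rw [← hagree _ e1, ← hagree _ e2]
        exact hcopyw d (by omega))
      (by rw [hsync, ← hsdef]; omega)
    have hib : i < b := by
      by_contra hc'
      have := blockStart_mono B' (show b ≤ i by omega)
      rw [hsync, ← hsdef] at this
      omega
    have h5 := blockStart_mono B' (show i + 1 ≤ b by omega)
    have h6 := blockStart_succ B' i hiB'
    rw [hsync, ← hsdef] at h6
    omega
  set q0 := q + δ with hq0def
  by_cases hcase : q0 ≤ j ∧ j ≤ q0 + L'
  · -- the edit position hits the natural source; use maximality of block b-1 instead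
    have hjlts : j < s := by omega
    have hb1t : b - 1 < B'.length := by omega
    set p1 := blockStart B' (b-1) with hp1def
    set L1 := (B'.get ⟨b-1, hb1t⟩).len with hL1def
    have hp1s : p1 + L1 + 1 = s' := by
      have := blockStart_succ B' (b-1) hb1t
      rw [show b - 1 + 1 = b by omega] at this
      omega
    have hp1 : s ≤ p1 := le_trans has (blockStart_mono B' (show a ≤ b - 1 by omega))
    obtain ⟨δ1, hδ1⟩ : ∃ δ1, p1 = s + δ1 := ⟨p1 - s, by omega⟩
    have habs := ge_of_copy hB' hb1t (q := q + δ1) (m := L1 + 1)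
      (by omega) (by omega)
      (fun d hd => by
        rw [← hp1def]
        have e1 : q + δ1 + d ≠ j := by omega
        have e2 : p1 + d ≠ j := by omega
        rw [← hagree _ e1, ← hagree _ e2]
        have := hcopyw (δ1 + d) (by omega)
        rw [show q + (δ1 + d) = q + δ1 + d by omega, show s + (δ1 + d) = p1 + d by omega] at this
        exact this)
      (by rw [← hp1def]; omega)
    omega
  · -- the natural source avoids the edit position; use maximality of block b
    have habs := ge_of_copy hB' hbt (q := q0) (m := L' + 1)
      (by omega) (by omega)
      (fun d hd => by
        rw [← hs'def]
        have e1 : q0 + d ≠ j := by omega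
        have e2 : s' + d ≠ j := by omega
        rw [← hagree _ e1, ← hagree _ e2]
        have := hcopyw (δ + d) (by omega)
        rw [show q + (δ + d) = q0 + d by omega, show s + (δ + d) = s' + d by omega] at this
        exact this)
      (by rw [← hs'def]; omega)
    omega

lemma Mset_disjoint_aux {B B' : List (LZBlock α)} {u v k : ℕ} (huv : u < v)
    (hv : v < B.length) (hu : k ∈ Mset B B' u) (hv' : k ∈ Mset B B' v) : False := by
  rw [mem_Mset] at hu hv'
  have h1 : u < B.length := by omega
  have h2 := blockStart_succ B u h1
  have h3 := blockFin_eq B u h1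
  have h4 := blockStart_mono B (show u + 1 ≤ v by omega)
  omega

lemma Mset_cover {n : ℕ} {B B' : List (LZBlock α)}
    (hs : (B.map (fun b => b.len + 1)).sum = n)
    (hs' : (B'.map (fun b => b.len + 1)).sum = n)
    {k : ℕ} (hk : k < B'.length) : ∃ i < B.length, k ∈ Mset B B' i := by
  classical
  have hp1 : 1 ≤ blockStart B' k := one_le_blockStart B' k
  have hpn : blockStart B' k ≤ n := blockStart_le_n hs' hk
  have hPt : blockStart B' k < blockStart B B.length := by
    rw [blockStart_total hs]; omega
  have hex : ∃ b, blockStart B' k < blockStart B b := ⟨B.length, hPt⟩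
  have hspec := Nat.find_spec hex
  have hble : Nat.find hex ≤ B.length := Nat.find_min' hex hPt
  have hb0 : Nat.find hex ≠ 0 := by
    intro h
    rw [h] at hspec
    have : blockStart B 0 = 1 := by simp [blockStart]
    omega
  have hmin := Nat.find_min hex (show Nat.find hex - 1 < Nat.find hex by omega)
  have h1 : Nat.find hex - 1 < B.length := by omega
  refine ⟨Nat.find hex - 1, h1, ?_⟩
  rw [mem_Mset]
  have h2 := blockStart_succ B (Nat.find hex - 1) h1
  have h3 := blockFin_eq B (Nat.find hex - 1) h1
  rw [show Nat.find hex - 1 + 1 = Nat.find hex by omega] at h2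
  exact ⟨hk, by omega, by omega⟩

lemma length_eq_sum_card {n : ℕ} {B B' : List (LZBlock α)}
    (hs : (B.map (fun b => b.len + 1)).sum = n)
    (hs' : (B'.map (fun b => b.len + 1)).sum = n) :
    B'.length = ∑ i ∈ Finset.range B.length, (Mset B B' i).card := by
  have heq : Finset.range B'.length = (Finset.range B.length).biUnion (Mset B B') := by
    ext k
    simp only [Finset.mem_biUnion, Finset.mem_range]
    constructor
    · intro hk
      obtain ⟨i, hi, h⟩ := Mset_cover hs hs' hk
      exact ⟨i, hi, h⟩
    · rintro ⟨i, hi, hk⟩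
      exact (mem_Mset.mp hk).1
  rw [← Finset.card_range B'.length, heq]
  refine Finset.card_biUnion ?_
  intro x hx y hy hxy
  rw [Finset.mem_coe, Finset.mem_range] at hx hy
  rw [Function.onFun, Finset.disjoint_left]
  intro k hk1 hk2
  rcases lt_or_gt_of_ne hxy with h | h
  · exact Mset_disjoint_aux h hy hk1 hk2
  · exact Mset_disjoint_aux h hx hk2 hk1
end LZAux

/-- Claim: `t' − t ≤ t₂`.
For neighboring strings `w ∼ w'` with LZ77 block decompositions `B` (with `t`
blocks) and `B'` (with `t'` blocks), `t' − t` is at most the number `t₂` of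
type-2 blocks among the blocks of `B`. -/
theorem lz77_block_count_diff {α : Type*} (n : ℕ) (w w' : ℕ → α)
    (hnb : Neighbor n w w')
    (B B' : List (LZBlock α))
    (hB : IsLZ77Parse n n w B) (hB' : IsLZ77Parse n n w' B') :
    ((B'.length : ℤ) - (B.length : ℤ)) ≤ ((typeSet B B' 2).card : ℤ) := by
  classical
  have hsum := length_eq_sum_card hB.1 hB'.1 (B' := B')
  have hbound : ∀ i ∈ Finset.range B.length,
      (Mset B B' i).card ≤ 1 + (if (Mset B B' i).card = 2 then 1 else 0) := by
    intro i hi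
    have := card_Mset_le_two hnb hB hB' (Finset.mem_range.mp hi)
    split_ifs <;> omega
  have h2 : B'.length ≤ B.length + (typeSet B B' 2).card := by
    calc B'.length = ∑ i ∈ Finset.range B.length, (Mset B B' i).card := hsum
    _ ≤ ∑ i ∈ Finset.range B.length, (1 + if (Mset B B' i).card = 2 then 1 else 0) :=
        Finset.sum_le_sum hbound
    _ = B.length + (typeSet B B' 2).card := by
        rw [Finset.sum_add_distrib, Finset.sum_const, smul_eq_mul, mul_one,
          Finset.card_range, typeSet, Finset.card_filter]
  omega
end
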